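/- Let a, b, c, d, e be positive integers with a, b, cd pairwise coprime and (cd, e) = 1. Then (abe)*_c / c - (ab)*_{cd} / (cd) ≡ (d - e)·(abe)*_{cd} / (cd) (mod 1), where x*_q denotes the multiplicative inverse of x modulo q. -/
import Mathlib


/-- If `a`, `b`, `cd` are pairwise coprime, `(cd, e) = 1`, and `c₁, w, u` are
inverses of `abe mod c`, `ab mod cd`, `abe mod cd` respectively, then
`d·(abe)*_c - (ab)*_{cd} ≡ (d-e)·(abe)*_{cd} (mod cd)`. -/
theorem stmt_16 (a b c d e c₁ w u : ℤ) (ha : 0 < a) (hb : 0 < b) (hc : 0 < c)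
    (hd : 0 < d) (he : 0 < e)
    (hab : IsCoprime a b) (hacd : IsCoprime a (c * d)) (hbcd : IsCoprime b (c * d))
    (hcde : IsCoprime (c * d) e)
    (hc₁ : a * b * e * c₁ ≡ 1 [ZMOD c])
    (hw : a * b * w ≡ 1 [ZMOD c * d])
    (hu : a * b * e * u ≡ 1 [ZMOD c * d]) :
    d * c₁ - w ≡ (d - e) * u [ZMOD c * d] := by
  have hcop : IsCoprime (a * b * e) (c * d) :=
    (hacd.mul_left hbcd).mul_left hcde.symm
  have hgcd : Int.gcd (a * b * e) (c * d) = 1 :=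
    Int.isCoprime_iff_gcd_eq_one.mp hcop
  have hm : 0 < c * d := mul_pos hc hd
  suffices h : a * b * e * (d * c₁ - w) ≡ a * b * e * ((d - e) * u) [ZMOD c * d] by
    have := Int.ModEq.cancel_left_div_gcd hm h
    rwa [Int.gcd_comm, hgcd, Nat.cast_one, Int.ediv_one] at this
  have h1 : d * (a * b * e * c₁) ≡ d * 1 [ZMOD c * d] := by
    rw [Int.modEq_iff_dvd] at hc₁ ⊢
    obtain ⟨k, hk⟩ := hc₁
    exact ⟨k, by linear_combination d * hk⟩
  have h2 : e * (a * b * w) ≡ e * 1 [ZMOD c * d] := hw.mul_left e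
  have h3 : (d - e) * (a * b * e * u) ≡ (d - e) * 1 [ZMOD c * d] := hu.mul_left (d - e)
  calc a * b * e * (d * c₁ - w) = d * (a * b * e * c₁) - e * (a * b * w) := by ring
    _ ≡ d * 1 - e * 1 [ZMOD c * d] := h1.sub h2
    _ = (d - e) * 1 := by ring
    _ ≡ (d - e) * (a * b * e * u) [ZMOD c * d] := h3.symm
    _ = a * b * e * ((d - e) * u) := by ring
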